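/- Define the tensor product of types by x ⊗ y := (x → (y → I)) → I (i.e. the dual of x → ȳ). Then Δ_{x⊗y} = (L_e ⊗ Δ_x) ⊕ (Δ_y ⊗ Δ_x) ⊕ (Δ_y ⊗ L_e) and λ_{x⊗y} = λ_x λ_y, where L_e = span{I}. -/

import Mathlib

open Matrix Kronecker
open scoped ComplexOrder

/-- Types of higher-order quantum theory. The trivial type `I` is `elem 1`. -/
inductive QT where
  | elem (n : ℕ)
  | arrow (x y : QT)

/-- The index type of the Hilbert space `H_x` associated to a type `x`. -/
def Idx : QT → Type
  | .elem n => Fin n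
  | .arrow x y => Idx x × Idx y

instance idxFintype : (x : QT) → Fintype (Idx x)
  | .elem n => inferInstanceAs (Fintype (Fin n))
  | .arrow x y =>
      letI := idxFintype x; letI := idxFintype y
      inferInstanceAs (Fintype (Idx x × Idx y))

instance idxDecEq : (x : QT) → DecidableEq (Idx x)
  | .elem n => inferInstanceAs (DecidableEq (Fin n))
  | .arrow x y =>
      letI := idxDecEq x; letI := idxDecEq y
      inferInstanceAs (DecidableEq (Idx x × Idx y))

/-- Partial trace over the first tensor factor. -/
noncomputable def ptrA {ι κ : Type} [Fintype ι]
    (M : Matrix (ι × κ) (ι × κ) ℂ) : Matrix κ κ ℂ :=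
  fun k l => ∑ i : ι, M (i, k) (i, l)

/-- Deterministic events of type `x`, defined recursively: for elementary types,
positive unit-trace operators; for `x → y`, positive operators `R` such that
`Tr_x[(Sᵀ ⊗ 1) R] ∈ Det y` for every `S ∈ Det x`. -/
noncomputable def Det : (x : QT) → Set (Matrix (Idx x) (Idx x) ℂ)
  | .elem n => {R | R.PosSemidef ∧ R.trace = 1}
  | .arrow x y =>
      setOf (fun (R : Matrix (Idx x × Idx y) (Idx x × Idx y) ℂ) =>
        R.PosSemidef ∧
        ∀ S ∈ Det x, ptrA ((Sᵀ ⊗ₖ (1 : Matrix (Idx y) (Idx y) ℂ)) * R) ∈ Det y)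

/-- The real subspace of Hermitian operators. -/
noncomputable def hermSub (ι : Type) [Fintype ι] [DecidableEq ι] :
    Submodule ℝ (Matrix ι ι ℂ) where
  carrier := {X | X.IsHermitian}
  add_mem' := fun ha hb => ha.add hb
  zero_mem' := Matrix.isHermitian_zero
  smul_mem' := fun c X hX => by
    show ((c • X)ᴴ = c • X)
    rw [Matrix.conjTranspose_smul, star_trivial, hX.eq]

/-- The real subspace of traceless Hermitian operators. -/
noncomputable def tlHermSub (ι : Type) [Fintype ι] [DecidableEq ι] :
    Submodule ℝ (Matrix ι ι ℂ) where
  carrier := {X | X.IsHermitian ∧ X.trace = 0}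
  add_mem' := fun ha hb => ⟨ha.1.add hb.1, by rw [trace_add, ha.2, hb.2, add_zero]⟩
  zero_mem' := ⟨Matrix.isHermitian_zero, Matrix.trace_zero ι ℂ⟩
  smul_mem' := fun c X hX =>
    ⟨by show ((c • X)ᴴ = c • X)
        rw [Matrix.conjTranspose_smul, star_trivial, hX.1.eq],
     by rw [trace_smul, hX.2, smul_zero]⟩

/-- The Hilbert–Schmidt orthogonal complement of `S` inside `B`. -/
noncomputable def perpWithin {ι : Type} [Fintype ι] [DecidableEq ι]
    (S B : Submodule ℝ (Matrix ι ι ℂ)) : Submodule ℝ (Matrix ι ι ℂ) where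
  carrier := {Z | Z ∈ B ∧ ∀ Y ∈ S, (Y * Z).trace = 0}
  add_mem' := fun ha hb =>
    ⟨B.add_mem ha.1 hb.1, fun Y hY => by
      rw [mul_add, trace_add, ha.2 Y hY, hb.2 Y hY, add_zero]⟩
  zero_mem' := ⟨B.zero_mem, fun Y _ => by simp⟩
  smul_mem' := fun c Z hZ =>
    ⟨B.smul_mem c hZ.1, fun Y hY => by
      rw [Matrix.mul_smul, trace_smul, hZ.2 Y hY, smul_zero]⟩

/-- Tensor product of operator subspaces, spanned by Kronecker products. -/
noncomputable def tensorSub {ι κ : Type} [Fintype ι] [DecidableEq ι]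
    [Fintype κ] [DecidableEq κ]
    (P : Submodule ℝ (Matrix ι ι ℂ)) (Q : Submodule ℝ (Matrix κ κ ℂ)) :
    Submodule ℝ (Matrix (ι × κ) (ι × κ) ℂ) :=
  Submodule.span ℝ {A | ∃ X ∈ P, ∃ Y ∈ Q, A = X ⊗ₖ Y}

/-- The one-dimensional subspace `L_e` spanned by the identity. -/
noncomputable def idSub (ι : Type) [Fintype ι] [DecidableEq ι] :
    Submodule ℝ (Matrix ι ι ℂ) :=
  Submodule.span ℝ {(1 : Matrix ι ι ℂ)}

/-- The subspace `Δ_x` of traceless Hermitian operators characterizing the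
deterministic events of type `x`:
`Δ_A = Traceless(H_A)` for elementary `A`, and
`Δ_{x→y} = [Herm(H_x) ⊗ Δ_y] ⊕ [Δ̄_x ⊗ Δ_y^⊥]`, where `Δ̄_x` is the complement of
`Δ_x` inside the traceless Hermitian operators and `Δ_y^⊥` its orthogonal
complement inside the Hermitian operators. -/
noncomputable def Delta : (x : QT) → Submodule ℝ (Matrix (Idx x) (Idx x) ℂ)
  | .elem n => tlHermSub (Fin n)
  | .arrow x y =>
      (tensorSub (hermSub (Idx x)) (Delta y) ⊔
        tensorSub (perpWithin (Delta x) (tlHermSub (Idx x)))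
          (perpWithin (Delta y) (hermSub (Idx y))) :
        Submodule ℝ (Matrix (Idx x × Idx y) (Idx x × Idx y) ℂ))

/-- The normalization constant `λ_x`: `λ_A = 1/d_A`, `λ_{x→y} = λ_y/(d_x λ_x)`. -/
noncomputable def lam : QT → ℝ
  | .elem n => 1 / n
  | .arrow x y => lam y / (Fintype.card (Idx x) * lam x)

/-- The tensor product of types: `x ⊗ y := (x → (y → I)) → I`. -/
def tens (x y : QT) : QT :=
  QT.arrow (QT.arrow x (QT.arrow y (QT.elem 1))) (QT.elem 1)

/-- The canonical identification of the index set of `H_{x ⊗ y}` with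
`Idx x × Idx y`. -/
def etens (x y : QT) : Idx (tens x y) ≃ Idx x × Idx y :=
  (Equiv.prodUnique (Idx x × (Idx y × Fin 1)) (Fin 1)).trans
    (Equiv.prodCongr (Equiv.refl (Idx x)) (Equiv.prodUnique (Idx y) (Fin 1)))


/-! ### Auxiliary development -/

namespace HOQTAux

variable {ι κ μ ν : Type} [Fintype ι] [DecidableEq ι] [Fintype κ] [DecidableEq κ]
  [Fintype μ] [DecidableEq μ] [Fintype ν] [DecidableEq ν]

omit [DecidableEq ι] in
lemma trace_conjTranspose_mul_self (x : Matrix ι ι ℂ) :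
    Matrix.trace (xᴴ * x) = ((∑ j, ∑ i, Complex.normSq (x i j) : ℝ) : ℂ) := by
  push_cast
  simp only [Matrix.trace, Matrix.diag, Matrix.mul_apply, Matrix.conjTranspose_apply]
  congr 1; ext j; congr 1; ext i
  rw [Complex.star_def, Complex.normSq_eq_conj_mul_self]

/-- The real Hilbert–Schmidt inner product on complex matrices. -/
noncomputable def matCore (ι : Type) [Fintype ι] :
    InnerProductSpace.Core ℝ (Matrix ι ι ℂ) where
  inner A B := (Matrix.trace (Aᴴ * B)).re
  conj_inner_symm := by
    intro x y
    simp only [starRingEnd_apply, star_trivial]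
    have : Matrix.trace (yᴴ * x) = star (Matrix.trace (xᴴ * y)) := by
      rw [← Matrix.trace_conjTranspose, Matrix.conjTranspose_mul,
        Matrix.conjTranspose_conjTranspose]
    rw [this, Complex.star_def, Complex.conj_re]
  re_inner_nonneg := by
    intro x
    have := trace_conjTranspose_mul_self x
    simp only [RCLike.re_to_real]
    rw [this, Complex.ofReal_re]
    exact Finset.sum_nonneg fun j _ => Finset.sum_nonneg fun i _ => Complex.normSq_nonneg _
  add_left := by
    intro x y z
    simp [Matrix.conjTranspose_add, Matrix.add_mul]
  smul_left := by
    intro x y r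
    simp only [starRingEnd_apply, star_trivial]
    rw [Matrix.conjTranspose_smul, star_trivial, smul_mul_assoc, Matrix.trace_smul]
    simp [Complex.real_smul]
  definite := by
    intro x hx
    have h := trace_conjTranspose_mul_self x
    change (Matrix.trace (xᴴ * x)).re = 0 at hx
    rw [h, Complex.ofReal_re] at hx
    have hnn : ∀ j ∈ (Finset.univ : Finset ι), (0:ℝ) ≤ ∑ i, Complex.normSq (x i j) := by
      intro j _; exact Finset.sum_nonneg fun i _ => Complex.normSq_nonneg _
    ext i j
    have hj := (Finset.sum_eq_zero_iff_of_nonneg hnn).mp hx j (Finset.mem_univ j)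
    have hnn' : ∀ i ∈ (Finset.univ : Finset ι), (0:ℝ) ≤ Complex.normSq (x i j) := by
      intro i _; exact Complex.normSq_nonneg _
    have hi := (Finset.sum_eq_zero_iff_of_nonneg hnn').mp hj i (Finset.mem_univ i)
    simpa using Complex.normSq_eq_zero.mp hi

noncomputable instance matNorm (ι : Type) [Fintype ι] :
    NormedAddCommGroup (Matrix ι ι ℂ) :=
  @InnerProductSpace.Core.toNormedAddCommGroup ℝ _ _ _ _ (matCore ι)

noncomputable instance matInner (ι : Type) [Fintype ι] :
    InnerProductSpace ℝ (Matrix ι ι ℂ) :=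
  InnerProductSpace.ofCore (matCore ι).toCore

omit [DecidableEq ι] in
lemma inner_def (A B : Matrix ι ι ℂ) :
    (inner ℝ A B : ℝ) = (Matrix.trace (Aᴴ * B)).re := rfl

omit [DecidableEq ι] in
lemma trace_real_of_herm {Y Z : Matrix ι ι ℂ} (hY : Y.IsHermitian) (hZ : Z.IsHermitian) :
    Matrix.trace (Y * Z) = (((Matrix.trace (Y * Z)).re : ℝ) : ℂ) := by
  have : star (Matrix.trace (Y * Z)) = Matrix.trace (Y * Z) := by
    rw [← Matrix.trace_conjTranspose, Matrix.conjTranspose_mul, hY.eq, hZ.eq,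
      Matrix.trace_mul_comm]
  exact (Complex.conj_eq_iff_re.mp this).symm

omit [DecidableEq ι] in
lemma inner_herm_left {Y Z : Matrix ι ι ℂ} (hY : Y.IsHermitian) :
    (inner ℝ Y Z : ℝ) = (Matrix.trace (Y * Z)).re := by
  rw [inner_def, hY.eq]

omit [DecidableEq ι] in
lemma trace_eq_zero_iff_inner {Y Z : Matrix ι ι ℂ} (hY : Y.IsHermitian)
    (hZ : Z.IsHermitian) :
    Matrix.trace (Y * Z) = 0 ↔ (inner ℝ Y Z : ℝ) = 0 := by
  rw [inner_herm_left hY]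
  constructor
  · intro h; rw [h]; simp
  · intro h; rw [trace_real_of_herm hY hZ, h]; simp

lemma mem_hermSub {A : Matrix ι ι ℂ} : A ∈ hermSub ι ↔ A.IsHermitian := Iff.rfl

lemma mem_tlHermSub {A : Matrix ι ι ℂ} :
    A ∈ tlHermSub ι ↔ A.IsHermitian ∧ A.trace = 0 := Iff.rfl

lemma tlHerm_le_herm : tlHermSub ι ≤ hermSub ι := fun _ h => h.1

/-- `perpWithin` coincides with the orthogonal complement intersected with the ambient
space, on spaces of Hermitian matrices. -/
lemma perpWithin_eq {S B : Submodule ℝ (Matrix ι ι ℂ)} (hS : S ≤ hermSub ι)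
    (hB : B ≤ hermSub ι) : perpWithin S B = B ⊓ Sᗮ := by
  ext Z
  constructor
  · rintro ⟨hZB, hZ⟩
    refine ⟨hZB, (Submodule.mem_orthogonal S Z).mpr fun Y hY => ?_⟩
    exact (trace_eq_zero_iff_inner (hS hY) (hB hZB)).mp (hZ Y hY)
  · rintro ⟨hZB, hZo⟩
    refine ⟨hZB, fun Y hY => ?_⟩
    exact (trace_eq_zero_iff_inner (hS hY) (hB hZB)).mpr
      ((Submodule.mem_orthogonal S Z).mp hZo Y hY)

/-- If `B = U ⊔ T` with `U ⊥ T`, then `B ⊓ Tᗮ = U`. -/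
lemma inf_orthogonal_eq_left {E : Type*} [NormedAddCommGroup E] [InnerProductSpace ℝ E]
    {B U T : Submodule ℝ E} (hB : B = U ⊔ T) (hUT : U ≤ Tᗮ) : B ⊓ Tᗮ = U := by
  apply le_antisymm
  · rintro z ⟨hzB, hzT⟩
    rw [hB] at hzB
    obtain ⟨u, hu, t, ht, rfl⟩ := Submodule.mem_sup.mp hzB
    have htT : t ∈ Tᗮ := by
      have : (u + t) - u ∈ Tᗮ := Submodule.sub_mem _ hzT (hUT hu)
      simpa using this
    have ht0 : t = 0 := by
      have := (Submodule.mem_orthogonal T t).mp htT t ht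
      exact inner_self_eq_zero.mp this
    simpa [ht0] using hu
  · exact le_inf (hB ▸ le_sup_left) hUT

/-- Existence of the orthogonal decomposition inside a finite-dimensional ambient space. -/
lemma orth_decomp {S B : Submodule ℝ (Matrix ι ι ℂ)} (h : S ≤ B) :
    B = S ⊔ (B ⊓ Sᗮ) := by
  haveI : IsUniformAddGroup S := S.toAddSubgroup.isUniformAddGroup
  haveI : CompleteSpace S := FiniteDimensional.complete ℝ S
  rw [inf_comm]
  exact (Submodule.sup_orthogonal_inf_of_hasOrthogonalProjection h).symm


/-! ### Tensor subspace lemmas -/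

lemma kron_mem_tensorSub {P : Submodule ℝ (Matrix ι ι ℂ)} {Q : Submodule ℝ (Matrix κ κ ℂ)}
    {X : Matrix ι ι ℂ} {Y : Matrix κ κ ℂ} (hX : X ∈ P) (hY : Y ∈ Q) :
    X ⊗ₖ Y ∈ tensorSub P Q :=
  Submodule.subset_span ⟨X, hX, Y, hY, rfl⟩

lemma tensorSub_le {P : Submodule ℝ (Matrix ι ι ℂ)} {Q : Submodule ℝ (Matrix κ κ ℂ)}
    {R : Submodule ℝ (Matrix (ι × κ) (ι × κ) ℂ)}
    (h : ∀ X ∈ P, ∀ Y ∈ Q, X ⊗ₖ Y ∈ R) : tensorSub P Q ≤ R := by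
  rw [tensorSub, Submodule.span_le]
  rintro A ⟨X, hX, Y, hY, rfl⟩
  exact h X hX Y hY

lemma tensorSub_mono {P P' : Submodule ℝ (Matrix ι ι ℂ)} {Q Q' : Submodule ℝ (Matrix κ κ ℂ)}
    (hP : P ≤ P') (hQ : Q ≤ Q') : tensorSub P Q ≤ tensorSub P' Q' :=
  tensorSub_le fun X hX Y hY => kron_mem_tensorSub (hP hX) (hQ hY)

lemma tensorSub_sup_left (P P' : Submodule ℝ (Matrix ι ι ℂ)) (Q : Submodule ℝ (Matrix κ κ ℂ)) :
    tensorSub (P ⊔ P') Q = tensorSub P Q ⊔ tensorSub P' Q := by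
  apply le_antisymm
  · apply tensorSub_le
    intro X hX Y hY
    obtain ⟨a, ha, b, hb, rfl⟩ := Submodule.mem_sup.mp hX
    rw [Matrix.add_kronecker]
    exact Submodule.add_mem _ (Submodule.mem_sup_left (kron_mem_tensorSub ha hY))
      (Submodule.mem_sup_right (kron_mem_tensorSub hb hY))
  · exact sup_le (tensorSub_mono le_sup_left le_rfl) (tensorSub_mono le_sup_right le_rfl)

lemma tensorSub_sup_right (P : Submodule ℝ (Matrix ι ι ℂ)) (Q Q' : Submodule ℝ (Matrix κ κ ℂ)) :
    tensorSub P (Q ⊔ Q') = tensorSub P Q ⊔ tensorSub P Q' := by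
  apply le_antisymm
  · apply tensorSub_le
    intro X hX Y hY
    obtain ⟨a, ha, b, hb, rfl⟩ := Submodule.mem_sup.mp hY
    rw [Matrix.kronecker_add]
    exact Submodule.add_mem _ (Submodule.mem_sup_left (kron_mem_tensorSub hX ha))
      (Submodule.mem_sup_right (kron_mem_tensorSub hX hb))
  · exact sup_le (tensorSub_mono le_rfl le_sup_left) (tensorSub_mono le_rfl le_sup_right)

lemma tensorSub_bot_right (P : Submodule ℝ (Matrix ι ι ℂ)) :
    tensorSub P (⊥ : Submodule ℝ (Matrix κ κ ℂ)) = ⊥ := by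
  apply le_antisymm _ bot_le
  apply tensorSub_le
  intro X hX Y hY
  rw [Submodule.mem_bot] at hY
  simp [hY, Matrix.kronecker_zero]

omit [Fintype ι] [DecidableEq ι] [Fintype κ] [DecidableEq κ] in
lemma isHermitian_kron {X : Matrix ι ι ℂ} {Y : Matrix κ κ ℂ}
    (hX : X.IsHermitian) (hY : Y.IsHermitian) : (X ⊗ₖ Y).IsHermitian := by
  show _ = _
  ext ⟨a, b⟩ ⟨c, d⟩
  have hx : star (X c a) = X a c := by
    have := congrFun (congrFun hX a) c
    rwa [Matrix.conjTranspose_apply] at this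
  have hy : star (Y d b) = Y b d := by
    have := congrFun (congrFun hY b) d
    rwa [Matrix.conjTranspose_apply] at this
  simp [Matrix.conjTranspose_apply, Matrix.kroneckerMap_apply, star_mul', hx, hy, mul_comm]

lemma tensorSub_le_herm {P : Submodule ℝ (Matrix ι ι ℂ)} {Q : Submodule ℝ (Matrix κ κ ℂ)}
    (hP : P ≤ hermSub ι) (hQ : Q ≤ hermSub κ) : tensorSub P Q ≤ hermSub (ι × κ) :=
  tensorSub_le fun _ hX _ hY => isHermitian_kron (hP hX) (hQ hY)

lemma tensorSub_le_tlHerm_left {P : Submodule ℝ (Matrix ι ι ℂ)} {Q : Submodule ℝ (Matrix κ κ ℂ)}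
    (hP : P ≤ tlHermSub ι) (hQ : Q ≤ hermSub κ) : tensorSub P Q ≤ tlHermSub (ι × κ) :=
  tensorSub_le fun X hX Y hY => ⟨isHermitian_kron (hP hX).1 (hQ hY), by
    rw [Matrix.trace_kronecker, (hP hX).2, zero_mul]⟩

lemma tensorSub_le_tlHerm_right {P : Submodule ℝ (Matrix ι ι ℂ)} {Q : Submodule ℝ (Matrix κ κ ℂ)}
    (hP : P ≤ hermSub ι) (hQ : Q ≤ tlHermSub κ) : tensorSub P Q ≤ tlHermSub (ι × κ) :=
  tensorSub_le fun X hX Y hY => ⟨isHermitian_kron (hP hX) (hQ hY).1, by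
    rw [Matrix.trace_kronecker, (hQ hY).2, mul_zero]⟩

/-! ### Orthogonality lemmas -/

lemma span_le_orthogonal {E : Type*} [NormedAddCommGroup E] [InnerProductSpace ℝ E]
    {s t : Set E} (h : ∀ a ∈ s, ∀ b ∈ t, (inner ℝ a b : ℝ) = 0) :
    Submodule.span ℝ s ≤ (Submodule.span ℝ t)ᗮ := by
  rw [Submodule.span_le]
  intro a ha
  rw [SetLike.mem_coe, Submodule.mem_orthogonal]
  intro u hu
  induction hu using Submodule.span_induction with
  | mem b hb => rw [real_inner_comm]; exact h a ha b hb
  | zero => exact inner_zero_left a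
  | add u v _ _ hu hv => rw [inner_add_left, hu, hv, add_zero]
  | smul c u _ hu => rw [real_inner_smul_left, hu, mul_zero]

lemma le_orthogonal_sup {E : Type*} [NormedAddCommGroup E] [InnerProductSpace ℝ E]
    {U A B : Submodule ℝ E} (hA : U ≤ Aᗮ) (hB : U ≤ Bᗮ) : U ≤ (A ⊔ B)ᗮ := by
  intro z hz
  rw [Submodule.mem_orthogonal]
  intro u hu
  obtain ⟨a, ha, b, hb, rfl⟩ := Submodule.mem_sup.mp hu
  rw [inner_add_left, (Submodule.mem_orthogonal _ _).mp (hA hz) a ha,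
    (Submodule.mem_orthogonal _ _).mp (hB hz) b hb, add_zero]

lemma tensorSub_ortho {P P' : Submodule ℝ (Matrix ι ι ℂ)} {Q Q' : Submodule ℝ (Matrix κ κ ℂ)}
    (hP : P ≤ hermSub ι) (hQ : Q ≤ hermSub κ)
    (h : (∀ X ∈ P, ∀ X' ∈ P', Matrix.trace (X * X') = 0) ∨
      (∀ Y ∈ Q, ∀ Y' ∈ Q', Matrix.trace (Y * Y') = 0)) :
    tensorSub P Q ≤ (tensorSub P' Q')ᗮ := by
  apply span_le_orthogonal
  rintro A ⟨X, hX, Y, hY, rfl⟩ B ⟨X', hX', Y', hY', rfl⟩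
  rw [inner_herm_left (isHermitian_kron (hP hX) (hQ hY)), ← Matrix.mul_kronecker_mul,
    Matrix.trace_kronecker]
  rcases h with h | h
  · rw [h X hX X' hX', zero_mul, Complex.zero_re]
  · rw [h Y hY Y' hY', mul_zero, Complex.zero_re]


/-! ### Structure of Hermitian matrix spaces -/

lemma mem_idSub {A : Matrix ι ι ℂ} : A ∈ idSub ι ↔ ∃ r : ℝ, A = r • 1 := by
  rw [idSub, Submodule.mem_span_singleton]
  exact ⟨fun ⟨r, hr⟩ => ⟨r, hr.symm⟩, fun ⟨r, hr⟩ => ⟨r, hr.symm⟩⟩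

lemma smul_one_isHermitian (r : ℝ) : ((r • 1 : Matrix ι ι ℂ)).IsHermitian := by
  show _ = _
  rw [Matrix.conjTranspose_smul, star_trivial, Matrix.conjTranspose_one]

lemma idSub_le_herm : idSub ι ≤ hermSub ι := by
  rw [idSub, Submodule.span_le]
  rintro A rfl
  exact Matrix.isHermitian_one

omit [DecidableEq ι] in
lemma herm_trace_real {A : Matrix ι ι ℂ} (hA : A.IsHermitian) :
    A.trace = ((A.trace.re : ℝ) : ℂ) := by
  have : star A.trace = A.trace := by rw [← Matrix.trace_conjTranspose, hA.eq]
  exact (Complex.conj_eq_iff_re.mp this).symm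

lemma herm_eq_id_sup_tl : hermSub ι = idSub ι ⊔ tlHermSub ι := by
  apply le_antisymm
  · intro A hA
    set r : ℝ := A.trace.re / (Fintype.card ι) with hr
    have h1 : (r • (1 : Matrix ι ι ℂ)) ∈ idSub ι := mem_idSub.mpr ⟨r, rfl⟩
    have htr : (A - r • 1).trace = 0 := by
      rw [Matrix.trace_sub, Matrix.trace_smul, Matrix.trace_one]
      rcases Nat.eq_zero_or_pos (Fintype.card ι) with h0 | hpos
      · haveI : IsEmpty ι := Fintype.card_eq_zero_iff.mp h0
        rw [Matrix.trace, Finset.univ_eq_empty, Finset.sum_empty]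
        simp [h0]
      · rw [herm_trace_real hA, Complex.real_smul]
        push_cast
        rw [hr]
        have hc : (Fintype.card ι : ℝ) ≠ 0 := by positivity
        push_cast [Complex.ofReal_div]
        field_simp
        ring
    have h2 : (A - r • 1) ∈ tlHermSub ι :=
      ⟨hA.sub (smul_one_isHermitian r), htr⟩
    exact Submodule.mem_sup.mpr ⟨r • 1, h1, A - r • 1, h2, by abel⟩
  · exact sup_le idSub_le_herm tlHerm_le_herm

lemma tlHerm_eq_perp_id : tlHermSub ι = perpWithin (idSub ι) (hermSub ι) := by
  ext Z
  constructor
  · rintro ⟨hZ, htr⟩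
    refine ⟨hZ, fun Y hY => ?_⟩
    obtain ⟨r, rfl⟩ := mem_idSub.mp hY
    rw [smul_mul_assoc, one_mul, Matrix.trace_smul, htr, smul_zero]
  · rintro ⟨hZ, h⟩
    refine ⟨hZ, ?_⟩
    have := h 1 (Submodule.mem_span_singleton_self _)
    rwa [one_mul] at this

lemma tz_id_left {T : Submodule ℝ (Matrix ι ι ℂ)} (hT : T ≤ tlHermSub ι) :
    ∀ X ∈ idSub ι, ∀ Z ∈ T, Matrix.trace (X * Z) = 0 := by
  intro X hX Z hZ
  obtain ⟨r, rfl⟩ := mem_idSub.mp hX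
  rw [smul_mul_assoc, one_mul, Matrix.trace_smul, (hT hZ).2, smul_zero]

lemma tz_id_right {T : Submodule ℝ (Matrix ι ι ℂ)} (hT : T ≤ tlHermSub ι) :
    ∀ Z ∈ T, ∀ X ∈ idSub ι, Matrix.trace (Z * X) = 0 := by
  intro Z hZ X hX
  rw [Matrix.trace_mul_comm]
  exact tz_id_left hT X hX Z hZ

lemma tz_perp_right {S B : Submodule ℝ (Matrix ι ι ℂ)} :
    ∀ Y ∈ S, ∀ Z ∈ perpWithin S B, Matrix.trace (Y * Z) = 0 :=
  fun Y hY _ hZ => hZ.2 Y hY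

lemma tz_perp_left {S B : Submodule ℝ (Matrix ι ι ℂ)} :
    ∀ Z ∈ perpWithin S B, ∀ Y ∈ S, Matrix.trace (Z * Y) = 0 := by
  intro Z hZ Y hY
  rw [Matrix.trace_mul_comm]
  exact hZ.2 Y hY

lemma perpWithin_le {S B : Submodule ℝ (Matrix ι ι ℂ)} : perpWithin S B ≤ B :=
  fun _ h => h.1

/-! ### One-dimensional index type -/

lemma tlHermSub_fin_one : tlHermSub (Fin 1) = ⊥ := by
  apply le_antisymm _ bot_le
  rintro A ⟨_, htr⟩
  rw [Matrix.trace_fin_one] at htr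
  rw [Submodule.mem_bot]
  ext i j
  fin_cases i <;> fin_cases j <;> simpa using htr

lemma hermSub_fin_one : hermSub (Fin 1) = idSub (Fin 1) := by
  apply le_antisymm _ idSub_le_herm
  intro A hA
  have hre : A 0 0 = ((A 0 0).re : ℂ) := by
    have := congrFun (congrFun (mem_hermSub.mp hA).eq 0) 0
    rw [Matrix.conjTranspose_apply] at this
    exact (Complex.conj_eq_iff_re.mp this).symm
  refine mem_idSub.mpr ⟨(A 0 0).re, ?_⟩
  ext i j
  fin_cases i <;> fin_cases j
  simp [Matrix.smul_apply, Complex.real_smul, ← hre]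

lemma perpWithin_bot (B : Submodule ℝ (Matrix ι ι ℂ)) :
    perpWithin (⊥ : Submodule ℝ (Matrix ι ι ℂ)) B = B := by
  ext Z
  refine ⟨fun h => h.1, fun h => ⟨h, fun Y hY => ?_⟩⟩
  rw [Submodule.mem_bot] at hY
  rw [hY, zero_mul, Matrix.trace_zero]

lemma tensor_id_id : tensorSub (idSub ι) (idSub κ) = idSub (ι × κ) := by
  apply le_antisymm
  · apply tensorSub_le
    intro X hX Y hY
    obtain ⟨r, rfl⟩ := mem_idSub.mp hX
    obtain ⟨s, rfl⟩ := mem_idSub.mp hY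
    rw [Matrix.smul_kronecker, Matrix.kronecker_smul, Matrix.one_kronecker_one, smul_smul]
    exact mem_idSub.mpr ⟨r * s, rfl⟩
  · rw [idSub, Submodule.span_le]
    rintro A rfl
    rw [← Matrix.one_kronecker_one]
    exact kron_mem_tensorSub (Submodule.mem_span_singleton_self _)
      (Submodule.mem_span_singleton_self _)


/-! ### Hermitian matrices on a product index are spanned by Kronecker products -/

omit [Fintype ι] [DecidableEq ι] [Fintype κ] [DecidableEq κ] in
lemma conjTranspose_kron (A : Matrix ι ι ℂ) (B : Matrix κ κ ℂ) :
    (A ⊗ₖ B)ᴴ = Aᴴ ⊗ₖ Bᴴ := by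
  ext ⟨a, b⟩ ⟨c, d⟩
  simp [Matrix.conjTranspose_apply, Matrix.kroneckerMap_apply, star_mul', mul_comm]

omit [Fintype ι] [DecidableEq ι] [Fintype κ] [DecidableEq κ] in
lemma kron_add_conj_kron (A : Matrix ι ι ℂ) (B : Matrix κ κ ℂ) :
    A ⊗ₖ B + Aᴴ ⊗ₖ Bᴴ = (2:ℝ)⁻¹ • ((A + Aᴴ) ⊗ₖ (B + Bᴴ))
      + (-(2:ℝ)⁻¹) • ((Complex.I • (A - Aᴴ)) ⊗ₖ (Complex.I • (B - Bᴴ))) := by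
  ext ⟨a, b⟩ ⟨c, d⟩
  simp only [Matrix.add_apply, Matrix.smul_apply, Matrix.kroneckerMap_apply,
    Matrix.conjTranspose_apply, Matrix.sub_apply, smul_eq_mul, Complex.real_smul]
  push_cast
  linear_combination ((1:ℂ)/2 * ((A a c - star (A c a)) * (B b d - star (B d b)))) *
    Complex.I_mul_I

omit [Fintype ι] [DecidableEq ι] in
lemma smul_I_sub_isHermitian (A : Matrix ι ι ℂ) :
    (Complex.I • (A - Aᴴ)).IsHermitian := by
  show _ = _
  rw [Matrix.conjTranspose_smul, Matrix.conjTranspose_sub, Matrix.conjTranspose_conjTranspose]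
  rw [Complex.star_def, Complex.conj_I, neg_smul, smul_sub, smul_sub]
  abel

lemma kron_conj_mem (A : Matrix ι ι ℂ) (B : Matrix κ κ ℂ) :
    A ⊗ₖ B + (A ⊗ₖ B)ᴴ ∈ tensorSub (hermSub ι) (hermSub κ) := by
  rw [conjTranspose_kron, kron_add_conj_kron]
  refine Submodule.add_mem _ (Submodule.smul_mem _ _ ?_) (Submodule.smul_mem _ _ ?_)
  · exact kron_mem_tensorSub (Matrix.isHermitian_add_transpose_self A)
      (Matrix.isHermitian_add_transpose_self B)
  · exact kron_mem_tensorSub (smul_I_sub_isHermitian A) (smul_I_sub_isHermitian B)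

lemma stdBasisMatrix_kron (i j : ι) (k l : κ) (c : ℂ) :
    Matrix.single (i, k) (j, l) c
      = Matrix.single i j c ⊗ₖ Matrix.single k l (1 : ℂ) := by
  ext ⟨a, b⟩ ⟨a', b'⟩
  simp only [Matrix.single, Matrix.of_apply, Matrix.kroneckerMap_apply,
    Prod.mk.injEq]
  by_cases h1 : i = a <;> by_cases h2 : j = a' <;> by_cases h3 : k = b <;>
    by_cases h4 : l = b' <;> simp [h1, h2, h3, h4]

lemma hermSub_prod : hermSub (ι × κ) = tensorSub (hermSub ι) (hermSub κ) := by
  apply le_antisymm _ (tensorSub_le_herm le_rfl le_rfl)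
  intro M hM
  have hMh : Mᴴ = M := (mem_hermSub.mp hM).eq
  have h2 : M = (2:ℝ)⁻¹ • (M + Mᴴ) := by
    rw [hMh, ← two_smul ℝ M, smul_smul]
    norm_num
  rw [h2]
  apply Submodule.smul_mem
  have hsum : M + Mᴴ = ∑ p : ι × κ, ∑ q : ι × κ,
      (Matrix.single p q (M p q) + (Matrix.single p q (M p q))ᴴ) := by
    simp only [Finset.sum_add_distrib]
    congr 1
    · exact Matrix.matrix_eq_sum_single M
    · conv_lhs => rw [Matrix.matrix_eq_sum_single M]
      simp only [Matrix.conjTranspose_sum]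
  rw [hsum]
  refine Submodule.sum_mem _ fun p _ => Submodule.sum_mem _ fun q _ => ?_
  obtain ⟨i, k⟩ := p
  obtain ⟨j, l⟩ := q
  rw [stdBasisMatrix_kron]
  exact kron_conj_mem _ _


/-! ### Reindexing lemmas -/

/-- Abbreviation for the reindexing linear equivalence. -/
noncomputable abbrev RE {ι κ : Type} (e : ι ≃ κ) :
    Matrix ι ι ℂ ≃ₗ[ℝ] Matrix κ κ ℂ :=
  Matrix.reindexLinearEquiv ℝ ℂ e e

omit [Fintype ι] [DecidableEq ι] [Fintype κ] [DecidableEq κ] in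
lemma RE_apply (e : ι ≃ κ) (M : Matrix ι ι ℂ) (a b : κ) :
    RE e M a b = M (e.symm a) (e.symm b) := rfl

omit [Fintype ι] [DecidableEq ι] [Fintype κ] [DecidableEq κ] in
lemma RE_conjTranspose (e : ι ≃ κ) (M : Matrix ι ι ℂ) : (RE e M)ᴴ = RE e Mᴴ := by
  ext a b
  simp [RE_apply, Matrix.conjTranspose_apply]

omit [DecidableEq ι] [DecidableEq κ] in
lemma RE_trace (e : ι ≃ κ) (M : Matrix ι ι ℂ) :
    Matrix.trace (RE e M) = Matrix.trace M := by
  show ∑ a, M (e.symm a) (e.symm a) = Matrix.trace M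
  rw [Matrix.trace]
  exact Equiv.sum_comp e.symm fun i => M i i

omit [DecidableEq ι] [DecidableEq κ] in
lemma RE_mul (e : ι ≃ κ) (M N : Matrix ι ι ℂ) :
    RE e M * RE e N = RE e (M * N) := by
  show M.submatrix e.symm e.symm * N.submatrix e.symm e.symm = (M * N).submatrix e.symm e.symm
  exact Matrix.submatrix_mul_equiv M N e.symm e.symm e.symm

omit [Fintype ι] [DecidableEq ι] [Fintype κ] [DecidableEq κ] in
lemma RE_RE {μ : Type} (e₁ : ι ≃ κ) (e₂ : κ ≃ μ) (M : Matrix ι ι ℂ) :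
    RE e₂ (RE e₁ M) = RE (e₁.trans e₂) M := by
  ext a b
  simp [RE_apply]

omit [Fintype ι] [DecidableEq ι] [Fintype κ] [DecidableEq κ] in
lemma map_RE_map_RE {μ : Type} (e₁ : ι ≃ κ) (e₂ : κ ≃ μ)
    (W : Submodule ℝ (Matrix ι ι ℂ)) :
    Submodule.map (RE e₂).toLinearMap (Submodule.map (RE e₁).toLinearMap W)
      = Submodule.map (RE (e₁.trans e₂)).toLinearMap W := by
  ext A
  constructor
  · rintro ⟨B, ⟨C, hC, rfl⟩, rfl⟩
    exact ⟨C, hC, (RE_RE e₁ e₂ C)⟩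
  · rintro ⟨C, hC, rfl⟩
    exact ⟨RE e₁ C, ⟨C, hC, rfl⟩, RE_RE e₁ e₂ C⟩

omit [Fintype ι] [DecidableEq ι] [Fintype κ] [DecidableEq κ] in
lemma RE_symm_RE (e : ι ≃ κ) (A : Matrix κ κ ℂ) : RE e (RE e.symm A) = A := by
  ext a b
  simp [RE_apply]

lemma map_RE_hermSub (e : ι ≃ κ) :
    Submodule.map (RE e).toLinearMap (hermSub ι) = hermSub κ := by
  ext A
  constructor
  · rintro ⟨M, hM, rfl⟩
    show ((RE e M)ᴴ = RE e M)
    rw [RE_conjTranspose, (mem_hermSub.mp hM).eq]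
  · intro hA
    refine ⟨RE e.symm A, ?_, ?_⟩
    · show ((RE e.symm A)ᴴ = RE e.symm A)
      rw [RE_conjTranspose, (mem_hermSub.mp hA).eq]
    · exact RE_symm_RE e A

lemma map_RE_tlHermSub (e : ι ≃ κ) :
    Submodule.map (RE e).toLinearMap (tlHermSub ι) = tlHermSub κ := by
  ext A
  constructor
  · rintro ⟨M, hM, rfl⟩
    refine ⟨?_, ?_⟩
    · show ((RE e M)ᴴ = RE e M)
      rw [RE_conjTranspose, hM.1.eq]
    · show (Matrix.trace (RE e M)) = 0
      rw [RE_trace]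
      exact hM.2
  · intro hA
    refine ⟨RE e.symm A, ⟨?_, ?_⟩, ?_⟩
    · show ((RE e.symm A)ᴴ = RE e.symm A)
      rw [RE_conjTranspose, hA.1.eq]
    · show (Matrix.trace (RE e.symm A)) = 0
      rw [RE_trace]
      exact hA.2
    · exact RE_symm_RE e A

lemma map_RE_perpWithin (e : ι ≃ κ) (S B : Submodule ℝ (Matrix ι ι ℂ)) :
    Submodule.map (RE e).toLinearMap (perpWithin S B)
      = perpWithin (Submodule.map (RE e).toLinearMap S)
          (Submodule.map (RE e).toLinearMap B) := by
  ext A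
  constructor
  · rintro ⟨Z, ⟨hZB, hZ⟩, rfl⟩
    refine ⟨⟨Z, hZB, rfl⟩, ?_⟩
    rintro Y' ⟨Y, hY, rfl⟩
    show Matrix.trace ((RE e) Y * (RE e) Z) = 0
    rw [RE_mul, RE_trace]
    exact hZ Y hY
  · rintro ⟨⟨Z, hZB, rfl⟩, hperp⟩
    refine ⟨Z, ⟨hZB, fun Y hY => ?_⟩, rfl⟩
    have h2 : Matrix.trace ((RE e) Y * (RE e) Z) = 0 := hperp (RE e Y) ⟨Y, hY, rfl⟩
    rwa [RE_mul, RE_trace] at h2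

lemma map_RE_tensor_right {μ : Type} [Fintype μ] [DecidableEq μ] (e : κ ≃ μ)
    (P : Submodule ℝ (Matrix ι ι ℂ)) (Q : Submodule ℝ (Matrix κ κ ℂ)) :
    tensorSub P (Submodule.map (RE e).toLinearMap Q)
      = Submodule.map (RE (Equiv.prodCongr (Equiv.refl ι) e)).toLinearMap (tensorSub P Q) := by
  have key : ∀ (X : Matrix ι ι ℂ) (Y : Matrix κ κ ℂ),
      X ⊗ₖ (RE e Y) = RE (Equiv.prodCongr (Equiv.refl ι) e) (X ⊗ₖ Y) := by
    intro X Y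
    ext ⟨i, a⟩ ⟨j, b⟩
    simp [RE_apply, Matrix.kroneckerMap_apply]
  apply le_antisymm
  · apply tensorSub_le
    rintro X hX Y' ⟨Y, hY, rfl⟩
    simp only [LinearEquiv.coe_coe]
    rw [key]
    exact Submodule.mem_map_of_mem (kron_mem_tensorSub hX hY)
  · rw [Submodule.map_le_iff_le_comap, tensorSub, Submodule.span_le]
    rintro A ⟨X, hX, Y, hY, rfl⟩
    rw [SetLike.mem_coe, Submodule.mem_comap, LinearEquiv.coe_coe, ← key]
    exact kron_mem_tensorSub hX (Submodule.mem_map_of_mem hY)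

lemma map_RE_prodComm (P : Submodule ℝ (Matrix ι ι ℂ)) (Q : Submodule ℝ (Matrix κ κ ℂ)) :
    Submodule.map (RE (Equiv.prodComm ι κ)).toLinearMap (tensorSub P Q)
      = tensorSub Q P := by
  have key : ∀ (X : Matrix ι ι ℂ) (Y : Matrix κ κ ℂ),
      RE (Equiv.prodComm ι κ) (X ⊗ₖ Y) = Y ⊗ₖ X := by
    intro X Y
    ext ⟨b, a⟩ ⟨b', a'⟩
    simp [RE_apply, Matrix.kroneckerMap_apply, mul_comm]
  apply le_antisymm
  · rw [Submodule.map_le_iff_le_comap, tensorSub, Submodule.span_le]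
    rintro A ⟨X, hX, Y, hY, rfl⟩
    rw [SetLike.mem_coe, Submodule.mem_comap, LinearEquiv.coe_coe, key]
    exact kron_mem_tensorSub hY hX
  · apply tensorSub_le
    intro Y hY X hX
    rw [← key]
    exact Submodule.mem_map_of_mem (kron_mem_tensorSub hX hY)

omit [Fintype κ] [DecidableEq κ] in
lemma kron_one_fin1 (X : Matrix ι ι ℂ) :
    X ⊗ₖ (1 : Matrix (Fin 1) (Fin 1) ℂ)
      = RE (Equiv.prodUnique ι (Fin 1)).symm X := by
  ext ⟨i, a⟩ ⟨j, b⟩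
  have : a = b := Subsingleton.elim a b
  simp [RE_apply, Matrix.kroneckerMap_apply, this]

lemma tensor_herm_fin1 (P : Submodule ℝ (Matrix ι ι ℂ)) :
    tensorSub P (hermSub (Fin 1))
      = Submodule.map (RE (Equiv.prodUnique ι (Fin 1)).symm).toLinearMap P := by
  apply le_antisymm
  · apply tensorSub_le
    intro X hX Y hY
    rw [hermSub_fin_one] at hY
    obtain ⟨r, rfl⟩ := mem_idSub.mp hY
    rw [Matrix.kronecker_smul, kron_one_fin1]
    exact Submodule.smul_mem _ r (Submodule.mem_map_of_mem hX)
  · rintro A ⟨X, hX, rfl⟩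
    simp only [LinearEquiv.coe_coe]
    rw [← kron_one_fin1]
    exact kron_mem_tensorSub hX Matrix.isHermitian_one


/-! ### The core computation -/

lemma le_orthogonal_of_tz {S T : Submodule ℝ (Matrix ι ι ℂ)} (hS : S ≤ hermSub ι)
    (hT : T ≤ hermSub ι) (h : ∀ X ∈ S, ∀ Z ∈ T, Matrix.trace (X * Z) = 0) : S ≤ Tᗮ := by
  intro X hX
  rw [Submodule.mem_orthogonal]
  intro Z hZ
  rw [real_inner_comm]
  exact (trace_eq_zero_iff_inner (hS hX) (hT hZ)).mp (h X hX Z hZ)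

lemma core_perp (Dx : Submodule ℝ (Matrix ι ι ℂ)) (Dy : Submodule ℝ (Matrix κ κ ℂ))
    (hDx : Dx ≤ tlHermSub ι) (hDy : Dy ≤ tlHermSub κ) :
    perpWithin
      (tensorSub (hermSub ι) (perpWithin Dy (tlHermSub κ)) ⊔
        tensorSub (perpWithin Dx (tlHermSub ι))
          (perpWithin (perpWithin Dy (tlHermSub κ)) (hermSub κ)))
      (tlHermSub (ι × κ))
      = tensorSub Dx (idSub κ) ⊔ tensorSub Dx Dy ⊔ tensorSub (idSub ι) Dy := by
  have hDxh : Dx ≤ hermSub ι := hDx.trans tlHerm_le_herm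
  have hDyh : Dy ≤ hermSub κ := hDy.trans tlHerm_le_herm
  set Dx' := perpWithin Dx (tlHermSub ι) with hDx'def
  set Dy' := perpWithin Dy (tlHermSub κ) with hDy'def
  have hDx'tl : Dx' ≤ tlHermSub ι := perpWithin_le
  have hDy'tl : Dy' ≤ tlHermSub κ := perpWithin_le
  have hDx'h : Dx' ≤ hermSub ι := hDx'tl.trans tlHerm_le_herm
  have hDy'h : Dy' ≤ hermSub κ := hDy'tl.trans tlHerm_le_herm
  have f2x : tlHermSub ι = Dx ⊔ Dx' := by
    rw [hDx'def, perpWithin_eq hDxh tlHerm_le_herm]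
    exact orth_decomp hDx
  have f2y : tlHermSub κ = Dy ⊔ Dy' := by
    rw [hDy'def, perpWithin_eq hDyh tlHerm_le_herm]
    exact orth_decomp hDy
  have f4 : perpWithin Dy' (hermSub κ) = idSub κ ⊔ Dy := by
    rw [perpWithin_eq hDy'h le_rfl]
    apply inf_orthogonal_eq_left
    · rw [herm_eq_id_sup_tl, f2y, ← sup_assoc]
    · exact sup_le (le_orthogonal_of_tz idSub_le_herm hDy'h (tz_id_left hDy'tl))
        (le_orthogonal_of_tz hDyh hDy'h tz_perp_right)
  have h9 : hermSub (ι × κ) =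
      (tensorSub (idSub ι) Dy ⊔ tensorSub (idSub ι) Dy' ⊔
        tensorSub Dx (idSub κ) ⊔ tensorSub Dx Dy ⊔ tensorSub Dx Dy' ⊔
        tensorSub Dx' (idSub κ) ⊔ tensorSub Dx' Dy ⊔ tensorSub Dx' Dy')
        ⊔ tensorSub (idSub ι) (idSub κ) := by
    rw [hermSub_prod, herm_eq_id_sup_tl (ι := ι), herm_eq_id_sup_tl (ι := κ), f2x, f2y]
    simp only [tensorSub_sup_left, tensorSub_sup_right]
    simp only [← Submodule.add_eq_sup]
    abel
  have hid : tlHermSub (ι × κ) = hermSub (ι × κ) ⊓ (tensorSub (idSub ι) (idSub κ))ᗮ := by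
    rw [tensor_id_id, tlHerm_eq_perp_id, perpWithin_eq idSub_le_herm le_rfl]
  have hUT8 : (tensorSub (idSub ι) Dy ⊔ tensorSub (idSub ι) Dy' ⊔
        tensorSub Dx (idSub κ) ⊔ tensorSub Dx Dy ⊔ tensorSub Dx Dy' ⊔
        tensorSub Dx' (idSub κ) ⊔ tensorSub Dx' Dy ⊔ tensorSub Dx' Dy')
      ≤ (tensorSub (idSub ι) (idSub κ))ᗮ := by
    refine sup_le (sup_le (sup_le (sup_le (sup_le (sup_le (sup_le ?_ ?_) ?_) ?_) ?_) ?_) ?_) ?_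
    · exact tensorSub_ortho idSub_le_herm hDyh (Or.inr (tz_id_right hDy))
    · exact tensorSub_ortho idSub_le_herm hDy'h (Or.inr (tz_id_right hDy'tl))
    · exact tensorSub_ortho hDxh idSub_le_herm (Or.inl (tz_id_right hDx))
    · exact tensorSub_ortho hDxh hDyh (Or.inl (tz_id_right hDx))
    · exact tensorSub_ortho hDxh hDy'h (Or.inl (tz_id_right hDx))
    · exact tensorSub_ortho hDx'h idSub_le_herm (Or.inl (tz_id_right hDx'tl))
    · exact tensorSub_ortho hDx'h hDyh (Or.inl (tz_id_right hDx'tl))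
    · exact tensorSub_ortho hDx'h hDy'h (Or.inl (tz_id_right hDx'tl))
  have htl8 : tlHermSub (ι × κ) =
      tensorSub (idSub ι) Dy ⊔ tensorSub (idSub ι) Dy' ⊔
        tensorSub Dx (idSub κ) ⊔ tensorSub Dx Dy ⊔ tensorSub Dx Dy' ⊔
        tensorSub Dx' (idSub κ) ⊔ tensorSub Dx' Dy ⊔ tensorSub Dx' Dy' := by
    rw [hid]
    exact inf_orthogonal_eq_left h9 hUT8
  have htl : tlHermSub (ι × κ) =
      (tensorSub Dx (idSub κ) ⊔ tensorSub Dx Dy ⊔ tensorSub (idSub ι) Dy) ⊔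
      (tensorSub (hermSub ι) Dy' ⊔ tensorSub Dx' (idSub κ ⊔ Dy)) := by
    rw [htl8, herm_eq_id_sup_tl (ι := ι), f2x]
    simp only [tensorSub_sup_left, tensorSub_sup_right]
    simp only [← Submodule.add_eq_sup]
    abel
  have hΔh : (tensorSub (hermSub ι) Dy' ⊔ tensorSub Dx' (perpWithin Dy' (hermSub κ)))
      ≤ hermSub (ι × κ) :=
    sup_le (tensorSub_le_herm le_rfl hDy'h) (tensorSub_le_herm hDx'h perpWithin_le)
  rw [perpWithin_eq hΔh tlHerm_le_herm]
  apply inf_orthogonal_eq_left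
  · rw [htl, f4]
  · apply le_orthogonal_sup
    · exact sup_le (sup_le (tensorSub_ortho hDxh idSub_le_herm (Or.inr (tz_id_left hDy'tl)))
        (tensorSub_ortho hDxh hDyh (Or.inr tz_perp_right)))
        (tensorSub_ortho idSub_le_herm hDyh (Or.inr tz_perp_right))
    · rw [f4]
      exact sup_le (sup_le (tensorSub_ortho hDxh idSub_le_herm (Or.inl tz_perp_right))
        (tensorSub_ortho hDxh hDyh (Or.inl tz_perp_right)))
        (tensorSub_ortho idSub_le_herm hDyh (Or.inl (tz_id_left hDx'tl)))


/-! ### Facts about `Delta` and `lam` -/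

lemma Delta_le_tl : (z : QT) → Delta z ≤ tlHermSub (Idx z)
  | .elem _ => le_rfl
  | .arrow u v => by
      show tensorSub (hermSub (Idx u)) (Delta v) ⊔
          tensorSub (perpWithin (Delta u) (tlHermSub (Idx u)))
            (perpWithin (Delta v) (hermSub (Idx v))) ≤ tlHermSub (Idx u × Idx v)
      exact sup_le (tensorSub_le_tlHerm_right le_rfl (Delta_le_tl v))
        (tensorSub_le_tlHerm_left perpWithin_le perpWithin_le)

lemma card_idx_arrow (u v : QT) :
    Fintype.card (Idx (QT.arrow u v)) = Fintype.card (Idx u) * Fintype.card (Idx v) := by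
  have h : Fintype.card (Idx (QT.arrow u v))
      = Fintype.card (Idx u × Idx v) := Fintype.card_congr (Equiv.refl _)
  rw [h, Fintype.card_prod]

lemma card_idx_elem (n : ℕ) : Fintype.card (Idx (QT.elem n)) = n := by
  have h : Fintype.card (Idx (QT.elem n)) = Fintype.card (Fin n) :=
    Fintype.card_congr (Equiv.refl _)
  rw [h, Fintype.card_fin]

lemma lam_eq_zero : (z : QT) → Fintype.card (Idx z) = 0 → lam z = 0
  | .elem n => by
      intro h
      rw [card_idx_elem] at h
      simp [lam, h]
  | .arrow u v => by
      intro h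
      rw [card_idx_arrow] at h
      rw [lam]
      rcases Nat.mul_eq_zero.mp h with hu | hv
      · rw [hu]
        simp
      · rw [lam_eq_zero v hv, zero_div]

end HOQTAux

open HOQTAux

set_option maxHeartbeats 2000000

/-- Characterization of the tensor product of types:
`Δ_{x⊗y} = (L_e ⊗ Δ_x) ⊕ (Δ_y ⊗ Δ_x) ⊕ (Δ_y ⊗ L_e)` (with the two tensor factors
written in the order `y`-system, `x`-system, as in the paper) and
`λ_{x⊗y} = λ_x λ_y`. -/
theorem delta_lam_tens (x y : QT) :
    Delta (tens x y) =
      Submodule.map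
        (Matrix.reindexLinearEquiv ℝ ℂ
          ((etens x y).trans (Equiv.prodComm (Idx x) (Idx y))).symm
          ((etens x y).trans (Equiv.prodComm (Idx x) (Idx y))).symm).toLinearMap
        (tensorSub (idSub (Idx y)) (Delta x) ⊔
          tensorSub (Delta y) (Delta x) ⊔
          tensorSub (Delta y) (idSub (Idx x))) ∧
    lam (tens x y) = lam x * lam y := by
  have hDe1 : Delta (QT.elem 1) = (⊥ : Submodule ℝ (Matrix (Fin 1) (Fin 1) ℂ)) := by
    show tlHermSub (Fin 1) = ⊥
    exact tlHermSub_fin_one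
  constructor
  · -- the Delta part
    have h1 : Delta (QT.arrow y (QT.elem 1)) =
        Submodule.map (RE ((Equiv.prodUnique (Idx y) (Fin 1)).symm)).toLinearMap
          (perpWithin (Delta y) (tlHermSub (Idx y))) := by
      have e1 : Delta (QT.arrow y (QT.elem 1)) =
          tensorSub (hermSub (Idx y)) (Delta (QT.elem 1)) ⊔
            tensorSub (perpWithin (Delta y) (tlHermSub (Idx y)))
              (perpWithin (Delta (QT.elem 1)) (hermSub (Fin 1))) := rfl
      erw [e1, hDe1, tensorSub_bot_right, perpWithin_bot, bot_sup_eq, tensor_herm_fin1]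
    have h2 : perpWithin (Delta (QT.arrow y (QT.elem 1))) (hermSub (Idx y × Fin 1)) =
        Submodule.map (RE ((Equiv.prodUnique (Idx y) (Fin 1)).symm)).toLinearMap
          (perpWithin (perpWithin (Delta y) (tlHermSub (Idx y))) (hermSub (Idx y))) := by
      erw [h1, ← map_RE_hermSub ((Equiv.prodUnique (Idx y) (Fin 1)).symm), ← map_RE_perpWithin]
      rfl
    have h3 : Delta (QT.arrow x (QT.arrow y (QT.elem 1))) =
        Submodule.map (RE (Equiv.prodCongr (Equiv.refl (Idx x))
            ((Equiv.prodUnique (Idx y) (Fin 1)).symm))).toLinearMap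
          (tensorSub (hermSub (Idx x)) (perpWithin (Delta y) (tlHermSub (Idx y))) ⊔
            tensorSub (perpWithin (Delta x) (tlHermSub (Idx x)))
              (perpWithin (perpWithin (Delta y) (tlHermSub (Idx y))) (hermSub (Idx y)))) := by
      have e3 : Delta (QT.arrow x (QT.arrow y (QT.elem 1))) =
          tensorSub (hermSub (Idx x)) (Delta (QT.arrow y (QT.elem 1))) ⊔
            tensorSub (perpWithin (Delta x) (tlHermSub (Idx x)))
              (perpWithin (Delta (QT.arrow y (QT.elem 1))) (hermSub (Idx y × Fin 1))) := rfl
      erw [e3, h2, h1, map_RE_tensor_right, map_RE_tensor_right, ← Submodule.map_sup]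
      rfl
    have h5 : Delta (tens x y) =
        Submodule.map (RE ((Equiv.prodUnique (Idx x × (Idx y × Fin 1)) (Fin 1)).symm)).toLinearMap
          (perpWithin (Delta (QT.arrow x (QT.arrow y (QT.elem 1))))
            (tlHermSub (Idx x × (Idx y × Fin 1)))) := by
      have e5 : Delta (tens x y) =
          tensorSub (hermSub (Idx x × (Idx y × Fin 1))) (Delta (QT.elem 1)) ⊔
            tensorSub (perpWithin (Delta (QT.arrow x (QT.arrow y (QT.elem 1))))
                (tlHermSub (Idx x × (Idx y × Fin 1))))
              (perpWithin (Delta (QT.elem 1)) (hermSub (Fin 1))) := rfl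
      erw [e5, hDe1, tensorSub_bot_right, perpWithin_bot, bot_sup_eq, tensor_herm_fin1]
    have h6 : perpWithin (Delta (QT.arrow x (QT.arrow y (QT.elem 1))))
          (tlHermSub (Idx x × (Idx y × Fin 1))) =
        Submodule.map (RE (Equiv.prodCongr (Equiv.refl (Idx x))
            ((Equiv.prodUnique (Idx y) (Fin 1)).symm))).toLinearMap
          (perpWithin
            (tensorSub (hermSub (Idx x)) (perpWithin (Delta y) (tlHermSub (Idx y))) ⊔
              tensorSub (perpWithin (Delta x) (tlHermSub (Idx x)))
                (perpWithin (perpWithin (Delta y) (tlHermSub (Idx y))) (hermSub (Idx y))))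
            (tlHermSub (Idx x × Idx y))) := by
      erw [h3, ← map_RE_tlHermSub (Equiv.prodCongr (Equiv.refl (Idx x))
        ((Equiv.prodUnique (Idx y) (Fin 1)).symm)), ← map_RE_perpWithin]
      rfl
    have h7 := core_perp (Delta x) (Delta y) (Delta_le_tl x) (Delta_le_tl y)
    have h8 : tensorSub (Delta x) (idSub (Idx y)) ⊔ tensorSub (Delta x) (Delta y) ⊔
          tensorSub (idSub (Idx x)) (Delta y) =
        Submodule.map (RE (Equiv.prodComm (Idx y) (Idx x))).toLinearMap
          (tensorSub (idSub (Idx y)) (Delta x) ⊔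
            tensorSub (Delta y) (Delta x) ⊔
            tensorSub (Delta y) (idSub (Idx x))) := by
      rw [Submodule.map_sup, Submodule.map_sup, map_RE_prodComm, map_RE_prodComm,
        map_RE_prodComm]
    have heq : (Equiv.prodComm (Idx y) (Idx x)).trans
        ((Equiv.prodCongr (Equiv.refl (Idx x)) ((Equiv.prodUnique (Idx y) (Fin 1)).symm)).trans
          ((Equiv.prodUnique (Idx x × (Idx y × Fin 1)) (Fin 1)).symm))
        = ((etens x y).trans (Equiv.prodComm (Idx x) (Idx y))).symm := by
      apply Equiv.ext
      intro p
      rfl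
    erw [h5, h6, h7, h8, map_RE_map_RE, map_RE_map_RE, heq]
    rfl
  · -- the lam part
    simp only [tens, lam, card_idx_arrow, card_idx_elem]
    push_cast
    by_cases hcx : (Fintype.card (Idx x)) = 0
    · simp [hcx, lam_eq_zero x hcx]
    by_cases hcy : (Fintype.card (Idx y)) = 0
    · simp [hcy, lam_eq_zero y hcy]
    by_cases hlx : lam x = 0
    · simp [hlx]
    by_cases hly : lam y = 0
    · simp [hly]
    have hcx' : ((Fintype.card (Idx x)) : ℝ) ≠ 0 := Nat.cast_ne_zero.mpr hcx
    have hcy' : ((Fintype.card (Idx y)) : ℝ) ≠ 0 := Nat.cast_ne_zero.mpr hcy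
    field_simp
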